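/- arXiv:2306.10648 — 2 statements merged into one kernel-verified Lean document; each statement's English description precedes it below -/
import Mathlib

section
/- Let z_1,...,z_n be independent Bernoulli random variables with parameters q_1,...,q_n, λ = Σ q_i, and ℓ a positive integer. Then min(λ, ℓ) ≤ 7 · E[min(Σ z_i, ℓ)]. -/
open Finset Real

noncomputable def berWeight {n : ℕ} (q : Fin n → ℝ) (z : Fin n → Bool) : ℝ :=
  ∏ i, if z i then q i else 1 - q i

def count {n : ℕ} (z : Fin n → Bool) : ℕ := ∑ i, if z i then 1 else 0

noncomputable def Hber {n : ℕ} (q : Fin n → ℝ) (ℓ : ℕ) : ℝ :=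
  ∑ z : Fin n → Bool, berWeight q z * min ((count z : ℝ)) (ℓ : ℝ)

noncomputable def Ptail {n : ℕ} (q : Fin n → ℝ) (m : ℕ) : ℝ :=
  ∑ z ∈ Finset.univ.filter (fun z : Fin n → Bool => m ≤ count z), berWeight q z

section Aux
variable {n : ℕ} {q : Fin n → ℝ}

lemma berWeight_nonneg (hq : ∀ i, q i ∈ Set.Icc (0 : ℝ) 1) (z : Fin n → Bool) :
    0 ≤ berWeight q z := by
  apply Finset.prod_nonneg
  intro i _
  rcases hq i with ⟨h0, h1⟩
  split <;> linarith

lemma sum_berWeight (_hq : ∀ i, q i ∈ Set.Icc (0 : ℝ) 1) :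
    ∑ z : Fin n → Bool, berWeight q z = 1 := by
  unfold berWeight
  rw [← Fintype.prod_sum (fun (i : Fin n) (b : Bool) => if b then q i else 1 - q i)]
  simp

lemma berWeight_split (i : Fin n) (z : Fin n → Bool) (hz : z i = true) :
    berWeight q z = q i *
      (berWeight q z + berWeight q (Function.update z i false)) := by
  unfold berWeight
  rw [← Finset.mul_prod_erase univ _ (mem_univ i),
      ← Finset.mul_prod_erase univ (fun j => if Function.update z i false j then q j else 1 - q j) (mem_univ i)]
  have hprod : ∏ j ∈ univ.erase i, (if Function.update z i false j then q j else 1 - q j)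
      = ∏ j ∈ univ.erase i, (if z j then q j else 1 - q j) := by
    apply Finset.prod_congr rfl
    intro j hj
    rw [Function.update_of_ne (Finset.mem_erase.mp hj).1]
  rw [hprod, hz, Function.update_self]
  norm_num
  left
  ring

lemma count_update (i : Fin n) (z : Fin n → Bool) (hz : z i = true) :
    count z = count (Function.update z i false) + 1 := by
  unfold count
  rw [← Finset.add_sum_erase univ _ (mem_univ i),
      ← Finset.add_sum_erase univ (fun j => if Function.update z i false j then 1 else 0) (mem_univ i)]
  have hprod : ∑ j ∈ univ.erase i, (if Function.update z i false j then 1 else 0)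
      = ∑ j ∈ univ.erase i, (if z j then 1 else 0) := by
    apply Finset.sum_congr rfl
    intro j hj
    rw [Function.update_of_ne (Finset.mem_erase.mp hj).1]
  rw [hprod, hz, Function.update_self]
  simp [add_comm]

/-- reindexing: summing `berWeight ∘ update · i false` over `{z i = true ∧ P (count z)}`
equals summing `berWeight` over `{z i = false ∧ P (count z + 1)}`. -/
lemma sum_update_reindex (i : Fin n) (P : ℕ → Prop) [DecidablePred P] :
    ∑ z ∈ univ.filter (fun z : Fin n → Bool => z i = true ∧ P (count z)),
        berWeight q (Function.update z i false)
      = ∑ z ∈ univ.filter (fun z : Fin n → Bool => z i = false ∧ P (count z + 1)),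
        berWeight q z := by
  apply Finset.sum_nbij' (fun z => Function.update z i false)
    (fun z => Function.update z i true)
  · intro z hz
    simp only [mem_filter, mem_univ, true_and] at hz ⊢
    constructor
    · simp
    · rw [← count_update i z hz.1]; exact hz.2
  · intro z hz
    simp only [mem_filter, mem_univ, true_and] at hz ⊢
    have hc : count (Function.update z i true) = count z + 1 := by
      have h1 : (Function.update z i true) i = true := by simp
      have := count_update i (Function.update z i true) h1
      have h2 : Function.update (Function.update z i true) i false = z := by
        funext j
        rcases eq_or_ne j i with rfl | hji
        · simp [hz.1]
        · simp [Function.update_of_ne hji]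
      rw [h2] at this
      exact this
    refine ⟨by simp, ?_⟩
    rw [hc]; exact hz.2
  · intro z hz
    simp only [mem_filter, mem_univ, true_and] at hz
    funext j
    rcases eq_or_ne j i with rfl | hji
    · simp [hz.1]
    · simp [Function.update_of_ne hji]
  · intro z hz
    simp only [mem_filter, mem_univ, true_and] at hz
    funext j
    rcases eq_or_ne j i with rfl | hji
    · simp [hz.1]
    · simp [Function.update_of_ne hji]
  · intro z hz; rfl

/-- key per-coordinate identity: for any predicate `P` on the count,
`∑_{z i = true, P (count z)} w z = q i * (that sum + reindexed partner sum)`. -/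
lemma sum_true_eq (i : Fin n) (P : ℕ → Prop) [DecidablePred P] :
    ∑ z ∈ univ.filter (fun z : Fin n → Bool => z i = true ∧ P (count z)), berWeight q z
      = q i * ((∑ z ∈ univ.filter (fun z : Fin n → Bool => z i = true ∧ P (count z)),
            berWeight q z)
          + ∑ z ∈ univ.filter (fun z : Fin n → Bool => z i = false ∧ P (count z + 1)),
            berWeight q z) := by
  rw [← sum_update_reindex i P, ← Finset.sum_add_distrib, Finset.mul_sum]
  apply Finset.sum_congr rfl
  intro z hz
  simp only [mem_filter, mem_univ, true_and] at hz
  exact berWeight_split i z hz.1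

/-- marginal: `P[z i = true] = q i`. -/
lemma sum_true (hq : ∀ i, q i ∈ Set.Icc (0 : ℝ) 1) (i : Fin n) :
    ∑ z ∈ univ.filter (fun z : Fin n → Bool => z i = true), berWeight q z = q i := by
  have h := sum_true_eq (q := q) i (fun _ => True)
  simp only [and_true] at h
  rw [h]
  have : (∑ z ∈ univ.filter (fun z : Fin n → Bool => z i = true), berWeight q z)
      + ∑ z ∈ univ.filter (fun z : Fin n → Bool => z i = false), berWeight q z = 1 := by
    rw [← sum_berWeight hq]
    rw [← Finset.sum_filter_add_sum_filter_not univ (fun z : Fin n → Bool => z i = true)]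
    simp
  rw [this, mul_one]

/-- tail bound: `E[z i · 1{count ≥ ℓ+1}] ≤ q i · Ptail q ℓ`. -/
lemma sum_true_tail_le (hq : ∀ i, q i ∈ Set.Icc (0 : ℝ) 1) (i : Fin n) (ℓ : ℕ) :
    ∑ z ∈ univ.filter (fun z : Fin n → Bool => z i = true ∧ ℓ + 1 ≤ count z),
        berWeight q z ≤ q i * Ptail q ℓ := by
  rw [sum_true_eq i (fun m => ℓ + 1 ≤ m)]
  have hqi := hq i
  apply mul_le_mul_of_nonneg_left _ hqi.1
  unfold Ptail
  rw [← Finset.sum_filter_add_sum_filter_not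
    (univ.filter (fun z : Fin n → Bool => ℓ ≤ count z)) (fun z => z i = true)]
  rw [Finset.filter_filter, Finset.filter_filter]
  apply add_le_add
  · apply Finset.sum_le_sum_of_subset_of_nonneg
    · intro z hz
      simp only [mem_filter, mem_univ, true_and] at hz ⊢
      exact ⟨by omega, hz.1⟩
    · intro z _ _; exact berWeight_nonneg hq z
  · apply Finset.sum_le_sum_of_subset_of_nonneg
    · intro z hz
      simp only [mem_filter, mem_univ, true_and] at hz ⊢
      exact ⟨by omega, by simp [hz.1]⟩
    · intro z _ _; exact berWeight_nonneg hq z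

end Aux

/-- For independent `z_i ~ Ber(q_i)` with `λ = Σ q_i` and any positive integer `ℓ`,
`min(λ, ℓ) ≤ 7 · E[min(Σ z_i, ℓ)]`. -/
theorem hcher_le_seven_hber (n : ℕ) (q : Fin n → ℝ) (hq : ∀ i, q i ∈ Set.Icc (0 : ℝ) 1)
    (lam : ℝ) (hlam : lam = ∑ i, q i) (ℓ : ℕ) (hℓ : 1 ≤ ℓ) :
    min lam (ℓ : ℝ) ≤ 7 * Hber q ℓ := by
  set p := Ptail q ℓ with hp
  have hw : ∀ z : Fin n → Bool, 0 ≤ berWeight q z := berWeight_nonneg hq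
  have hterm : ∀ z : Fin n → Bool, 0 ≤ berWeight q z * min ((count z : ℝ)) (ℓ : ℝ) := by
    intro z
    apply mul_nonneg (hw z)
    exact le_min (by positivity) (by positivity)
  have hH0 : 0 ≤ Hber q ℓ := Finset.sum_nonneg fun z _ => hterm z
  have hp0 : 0 ≤ p := Finset.sum_nonneg fun z _ => hw z
  have hp1 : p ≤ 1 := by
    rw [hp, ← sum_berWeight hq]
    exact Finset.sum_le_sum_of_subset_of_nonneg (Finset.filter_subset _ _)
      (fun z _ _ => hw z)
  -- Hber ≥ ℓ * p
  have hHl : (ℓ : ℝ) * p ≤ Hber q ℓ := by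
    rw [hp, Ptail, Finset.mul_sum]
    calc ∑ z ∈ univ.filter (fun z : Fin n → Bool => ℓ ≤ count z), (ℓ : ℝ) * berWeight q z
        = ∑ z ∈ univ.filter (fun z : Fin n → Bool => ℓ ≤ count z),
            berWeight q z * min ((count z : ℝ)) (ℓ : ℝ) := by
          apply Finset.sum_congr rfl
          intro z hz
          simp only [mem_filter, mem_univ, true_and] at hz
          rw [min_eq_right (by exact_mod_cast hz), mul_comm]
      _ ≤ Hber q ℓ := Finset.sum_le_sum_of_subset_of_nonneg (Finset.filter_subset _ _)
          (fun z _ _ => hterm z)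
  -- Hber ≥ lam * (1 - p)
  have hHlam : lam * (1 - p) ≤ Hber q ℓ := by
    have hper : ∀ i : Fin n, q i * (1 - p) ≤
        ∑ z ∈ univ.filter (fun z : Fin n → Bool => z i = true ∧ count z ≤ ℓ),
          berWeight q z := by
      intro i
      have hsplit : (∑ z ∈ univ.filter (fun z : Fin n → Bool => z i = true ∧ count z ≤ ℓ),
            berWeight q z)
          + ∑ z ∈ univ.filter (fun z : Fin n → Bool => z i = true ∧ ℓ + 1 ≤ count z),
            berWeight q z = q i := by
        rw [← sum_true hq i]
        rw [← Finset.sum_filter_add_sum_filter_not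
          (univ.filter (fun z : Fin n → Bool => z i = true)) (fun z => count z ≤ ℓ)]
        rw [Finset.filter_filter, Finset.filter_filter]
        congr 1
        apply Finset.sum_congr _ (fun _ _ => rfl)
        apply Finset.filter_congr
        intro z _
        constructor
        · rintro ⟨h1, h2⟩; exact ⟨h1, by omega⟩
        · rintro ⟨h1, h2⟩; exact ⟨h1, by omega⟩
      have htail := sum_true_tail_le hq i ℓ
      nlinarith [ (hq i).1 ]
    have hsum : ∑ i, (∑ z ∈ univ.filter
          (fun z : Fin n → Bool => z i = true ∧ count z ≤ ℓ), berWeight q z)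
        ≤ Hber q ℓ := by
      have hswap : ∀ i : Fin n,
          (∑ z ∈ univ.filter (fun z : Fin n → Bool => z i = true ∧ count z ≤ ℓ),
            berWeight q z)
          = ∑ z ∈ univ.filter (fun z : Fin n → Bool => count z ≤ ℓ),
              (if z i = true then berWeight q z else 0) := by
        intro i
        rw [Finset.sum_filter, Finset.sum_filter]
        apply Finset.sum_congr rfl
        intro z _
        by_cases h1 : z i = true <;> by_cases h2 : count z ≤ ℓ <;> simp [h1, h2]
      calc ∑ i, (∑ z ∈ univ.filter
              (fun z : Fin n → Bool => z i = true ∧ count z ≤ ℓ), berWeight q z)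
          = ∑ z ∈ univ.filter (fun z : Fin n → Bool => count z ≤ ℓ),
              ∑ i, (if z i = true then berWeight q z else 0) := by
            rw [← Finset.sum_comm]
            exact Finset.sum_congr rfl fun i _ => hswap i
        _ = ∑ z ∈ univ.filter (fun z : Fin n → Bool => count z ≤ ℓ),
              berWeight q z * min ((count z : ℝ)) (ℓ : ℝ) := by
            apply Finset.sum_congr rfl
            intro z hz
            simp only [mem_filter, mem_univ, true_and] at hz
            have : ∑ i, (if z i = true then berWeight q z else 0)
                = (count z : ℝ) * berWeight q z := by
              unfold count
              push_cast
              rw [Finset.sum_mul]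
              apply Finset.sum_congr rfl
              intro i _
              by_cases h : z i = true <;> simp [h]
            rw [this, min_eq_left (by exact_mod_cast hz), mul_comm]
        _ ≤ Hber q ℓ := Finset.sum_le_sum_of_subset_of_nonneg (Finset.filter_subset _ _)
            (fun z _ _ => hterm z)
    calc lam * (1 - p) = ∑ i, q i * (1 - p) := by rw [hlam, Finset.sum_mul]
      _ ≤ ∑ i, (∑ z ∈ univ.filter
            (fun z : Fin n → Bool => z i = true ∧ count z ≤ ℓ), berWeight q z) :=
          Finset.sum_le_sum fun i _ => hper i
      _ ≤ Hber q ℓ := hsum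
  rcases min_cases lam (ℓ : ℝ) with ⟨hmin, hle⟩ | ⟨hmin, hle⟩ <;> rw [hmin] <;> nlinarith
end

section
/- Let z_1,...,z_n be independent Bernoulli random variables with parameters q_1,...,q_n, λ = Σ q_i, and ℓ a positive integer. Then min(λ, ℓ) - E[min(Σ z_i, ℓ)] ≤ (5/√ℓ) · min(λ, ℓ). -/
open Finset Real

lemma prodform {n : ℕ} (f : Fin n → Bool → ℝ) :
    ∑ z : Fin n → Bool, ∏ i, f i (z i) = ∏ i, (f i true + f i false) := by
  rw [← Fintype.piFinset_univ, ← Finset.prod_univ_sum]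
  simp

lemma sum_w {n : ℕ} (q : Fin n → ℝ) : ∑ z : Fin n → Bool, berWeight q z = 1 := by
  unfold berWeight
  rw [prodform fun i b => if b then q i else 1 - q i]
  simp

lemma mean_one {n : ℕ} (q : Fin n → ℝ) (i : Fin n) :
    ∑ z : Fin n → Bool, berWeight q z * (if z i then (1:ℝ) else 0) = q i := by
  have key : ∀ z : Fin n → Bool, berWeight q z * (if z i then (1:ℝ) else 0)
      = ∏ k, ((if z k then q k else 1 - q k) * (if k = i then (if z k then (1:ℝ) else 0) else 1)) := by
    intro z
    rw [Finset.prod_mul_distrib]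
    unfold berWeight
    congr 1
    simp [Finset.prod_ite_eq']
  simp_rw [key]
  rw [prodform (fun k b => (if b then q k else 1 - q k) * (if k = i then (if b then (1:ℝ) else 0) else 1))]
  trans (∏ k, if k = i then q k else 1)
  · exact Finset.prod_congr rfl fun k _ => by by_cases h : k = i <;> simp [h]
  · simp [Finset.prod_ite_eq']

lemma pair {n : ℕ} (q : Fin n → ℝ) (i j : Fin n) (hij : i ≠ j) :
    ∑ z : Fin n → Bool, berWeight q z * ((if z i then (1:ℝ) else 0) * (if z j then (1:ℝ) else 0))
      = q i * q j := by
  have key : ∀ z : Fin n → Bool, berWeight q z * ((if z i then (1:ℝ) else 0) * (if z j then (1:ℝ) else 0))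
      = ∏ k, ((if z k then q k else 1 - q k) * (if k = i then (if z k then (1:ℝ) else 0) else 1)
          * (if k = j then (if z k then (1:ℝ) else 0) else 1)) := by
    intro z
    rw [Finset.prod_mul_distrib, Finset.prod_mul_distrib]
    unfold berWeight
    rw [mul_assoc]
    congr 1
    congr 1 <;> simp [Finset.prod_ite_eq']
  simp_rw [key]
  rw [prodform (fun k b => (if b then q k else 1 - q k) * (if k = i then (if b then (1:ℝ) else 0) else 1) * (if k = j then (if b then (1:ℝ) else 0) else 1))]
  trans (∏ k, (if k = i then q k else 1) * (if k = j then q k else 1))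
  · refine Finset.prod_congr rfl fun k _ => ?_
    by_cases h : k = i <;> by_cases h' : k = j <;> simp [h, h'] <;> simp_all
  · rw [Finset.prod_mul_distrib]
    simp [Finset.prod_ite_eq', hij]

lemma count_cast {n : ℕ} (z : Fin n → Bool) :
    ((count z : ℝ)) = ∑ i, (if z i then (1:ℝ) else 0) := by
  unfold count; push_cast; rfl

lemma wpos {n : ℕ} (q : Fin n → ℝ) (hq : ∀ i, q i ∈ Set.Icc (0:ℝ) 1) (z : Fin n → Bool) :
    0 ≤ berWeight q z := by
  unfold berWeight
  apply Finset.prod_nonneg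
  intro i _
  rcases hq i with ⟨h0, h1⟩
  by_cases h : z i <;> simp [h] <;> linarith

lemma mean_count {n : ℕ} (q : Fin n → ℝ) :
    ∑ z : Fin n → Bool, berWeight q z * (count z : ℝ) = ∑ i, q i := by
  simp_rw [count_cast, Finset.mul_sum]
  rw [Finset.sum_comm]
  exact Finset.sum_congr rfl fun i _ => mean_one q i

lemma sq_count {n : ℕ} (q : Fin n → ℝ) :
    ∑ z : Fin n → Bool, berWeight q z * (count z : ℝ)^2
      = ∑ i, (q i * (∑ k, q k) + q i - q i^2) := by
  have e1 : ∀ z : Fin n → Bool, berWeight q z * (count z : ℝ)^2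
      = ∑ i, ∑ j, berWeight q z * ((if z i then (1:ℝ) else 0) * (if z j then (1:ℝ) else 0)) := by
    intro z
    rw [count_cast, sq, Finset.sum_mul_sum]
    rw [Finset.mul_sum]
    exact Finset.sum_congr rfl fun i _ => by rw [Finset.mul_sum]
  simp_rw [e1]
  rw [Finset.sum_comm]
  refine Finset.sum_congr rfl fun i _ => ?_
  rw [Finset.sum_comm]
  have e2 : ∀ j, ∑ z : Fin n → Bool, berWeight q z * ((if z i then (1:ℝ) else 0) * (if z j then (1:ℝ) else 0))
      = if i = j then q i else q i * q j := by
    intro j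
    by_cases h : i = j
    · subst h
      simp only [if_pos rfl]
      have : ∀ z : Fin n → Bool, ((if z i then (1:ℝ) else 0) * (if z i then (1:ℝ) else 0)) = (if z i then (1:ℝ) else 0) := by
        intro z; by_cases hz : z i <;> simp [hz]
      simp_rw [this]
      exact mean_one q i
    · rw [if_neg h]
      exact pair q i j h
  simp_rw [e2]
  have e3 : ∀ j, (if i = j then q i else q i * q j) = q i * q j + (if i = j then q i - q i * q i else 0) := by
    intro j; by_cases h : i = j
    · subst h; simp
    · simp [h]
  simp_rw [e3]
  rw [Finset.sum_add_distrib, Finset.sum_ite_eq, if_pos (Finset.mem_univ i), ← Finset.mul_sum]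
  ring

lemma var_le {n : ℕ} (q : Fin n → ℝ) (hq : ∀ i, q i ∈ Set.Icc (0:ℝ) 1) (lam : ℝ)
    (hlam : lam = ∑ i, q i) :
    ∑ z : Fin n → Bool, berWeight q z * ((count z : ℝ) - lam)^2 ≤ lam := by
  have expand : ∀ z : Fin n → Bool, berWeight q z * ((count z : ℝ) - lam)^2
      = berWeight q z * (count z : ℝ)^2 - 2*lam*(berWeight q z * (count z : ℝ)) + lam^2 * berWeight q z := by
    intro z; ring
  simp_rw [expand]
  rw [Finset.sum_add_distrib, Finset.sum_sub_distrib, ← Finset.mul_sum, ← Finset.mul_sum,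
    sum_w, mean_count, sq_count]
  have key : ∑ i, (q i * (∑ k, q k) + q i - q i^2) = lam^2 + lam - ∑ i, q i^2 := by
    rw [Finset.sum_sub_distrib, Finset.sum_add_distrib, ← Finset.sum_mul, ← hlam]
    ring
  rw [key, ← hlam]
  have : ∑ i, q i^2 ≥ 0 := Finset.sum_nonneg fun i _ => sq_nonneg _
  nlinarith

lemma abs_dev_le {n : ℕ} (q : Fin n → ℝ) (hq : ∀ i, q i ∈ Set.Icc (0:ℝ) 1) (lam : ℝ)
    (hlam : lam = ∑ i, q i) :
    ∑ z : Fin n → Bool, berWeight q z * |(count z : ℝ) - lam| ≤ Real.sqrt lam := by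
  set T := ∑ z : Fin n → Bool, berWeight q z * |(count z : ℝ) - lam| with hT
  have hT0 : 0 ≤ T := Finset.sum_nonneg fun z _ => mul_nonneg (wpos q hq z) (abs_nonneg _)
  apply Real.le_sqrt_of_sq_le
  have cs := Finset.sum_mul_sq_le_sq_mul_sq Finset.univ
    (fun z : Fin n → Bool => Real.sqrt (berWeight q z))
    (fun z : Fin n → Bool => Real.sqrt (berWeight q z) * |(count z : ℝ) - lam|)
  have e1 : ∀ z : Fin n → Bool, Real.sqrt (berWeight q z) * (Real.sqrt (berWeight q z) * |(count z : ℝ) - lam|)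
      = berWeight q z * |(count z : ℝ) - lam| := by
    intro z; rw [← mul_assoc, Real.mul_self_sqrt (wpos q hq z)]
  have e2 : ∀ z : Fin n → Bool, (Real.sqrt (berWeight q z))^2 = berWeight q z :=
    fun z => Real.sq_sqrt (wpos q hq z)
  have e3 : ∀ z : Fin n → Bool, (Real.sqrt (berWeight q z) * |(count z : ℝ) - lam|)^2
      = berWeight q z * ((count z : ℝ) - lam)^2 := by
    intro z; rw [mul_pow, Real.sq_sqrt (wpos q hq z), sq_abs]
  simp_rw [e1, e2, e3] at cs
  rw [sum_w] at cs
  calc T^2 ≤ 1 * ∑ z : Fin n → Bool, berWeight q z * ((count z : ℝ) - lam)^2 := cs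
    _ ≤ lam := by rw [one_mul]; exact var_le q hq lam hlam

/-- For independent `z_i ~ Ber(q_i)` with `λ = Σ q_i` and a positive integer `ℓ`,
`min(λ, ℓ) - E[min(Σ z_i, ℓ)] ≤ (5/√ℓ) · min(λ, ℓ)`. -/
theorem hcher_sub_hber_sqrt_ell (n : ℕ) (q : Fin n → ℝ) (hq : ∀ i, q i ∈ Set.Icc (0 : ℝ) 1)
    (lam : ℝ) (hlam : lam = ∑ i, q i) (ℓ : ℕ) (hℓ : 1 ≤ ℓ) :
    min lam (ℓ : ℝ) - Hber q ℓ ≤ 5 / Real.sqrt (ℓ : ℝ) * min lam (ℓ : ℝ) := by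
  have hW := wpos q hq
  have hlam0 : 0 ≤ lam := hlam ▸ Finset.sum_nonneg fun i _ => (hq i).1
  have hl1 : (1:ℝ) ≤ (ℓ:ℝ) := by exact_mod_cast hℓ
  have hl0 : (0:ℝ) < (ℓ:ℝ) := by linarith
  set s := Real.sqrt (ℓ:ℝ) with hs
  have hs2 : s^2 = (ℓ:ℝ) := Real.sq_sqrt hl0.le
  have hs1 : 1 ≤ s := Real.one_le_sqrt.2 hl1
  have hs0 : 0 < s := by linarith
  have hsl : s ≤ (ℓ:ℝ) := by nlinarith
  have hmean : ∑ z : Fin n → Bool, berWeight q z * (count z : ℝ) = lam := by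
    rw [mean_count, hlam]
  have hvar := var_le q hq lam hlam
  have habs := abs_dev_le q hq lam hlam
  have hc0 : ∀ z : Fin n → Bool, (0:ℝ) ≤ (count z : ℝ) := fun z => Nat.cast_nonneg _
  rcases le_or_gt lam (ℓ:ℝ) with hcase | hcase
  · -- lam ≤ ℓ : min = lam
    have hmin : min lam (ℓ:ℝ) = lam := min_eq_left hcase
    have hD : min lam (ℓ:ℝ) - Hber q ℓ
        = ∑ z : Fin n → Bool, berWeight q z * ((count z : ℝ) - min ((count z : ℝ)) (ℓ:ℝ)) := by
      rw [hmin, ← hmean]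
      unfold Hber
      rw [← Finset.sum_sub_distrib]
      exact Finset.sum_congr rfl fun z _ => (mul_sub _ _ _).symm
    have hg0 : ∀ z : Fin n → Bool, 0 ≤ (count z : ℝ) - min ((count z : ℝ)) (ℓ:ℝ) :=
      fun z => sub_nonneg.2 (min_le_left _ _)
    have hD0 : 0 ≤ min lam (ℓ:ℝ) - Hber q ℓ := by
      rw [hD]; exact Finset.sum_nonneg fun z _ => mul_nonneg (hW z) (hg0 z)
    rcases le_or_gt (ℓ:ℝ) (25*lam) with h25 | h25
    · -- ℓ ≤ 25 lam : use absolute deviation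
      have pb : ∀ z : Fin n → Bool, (count z : ℝ) - min ((count z : ℝ)) (ℓ:ℝ) ≤ |(count z : ℝ) - lam| := by
        intro z
        rcases le_total ((count z : ℝ)) (ℓ:ℝ) with h | h
        · rw [min_eq_left h]; simp [abs_nonneg]
        · rw [min_eq_right h]
          calc (count z : ℝ) - (ℓ:ℝ) ≤ (count z : ℝ) - lam := by linarith
            _ ≤ |(count z : ℝ) - lam| := le_abs_self _
      have hDle : min lam (ℓ:ℝ) - Hber q ℓ ≤ Real.sqrt lam := by
        rw [hD]
        refine le_trans (Finset.sum_le_sum fun z _ => mul_le_mul_of_nonneg_left (pb z) (hW z)) habs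
      rw [hmin] at hDle
      rw [hmin, div_mul_eq_mul_div, le_div_iff₀ hs0]
      calc (lam - Hber q ℓ) * s ≤ Real.sqrt lam * s :=
            mul_le_mul_of_nonneg_right hDle hs0.le
        _ = Real.sqrt (lam * (ℓ:ℝ)) := (Real.sqrt_mul hlam0 _).symm
        _ ≤ Real.sqrt (25*lam^2) := Real.sqrt_le_sqrt (by nlinarith)
        _ = 5*lam := by
            rw [show (25:ℝ)*lam^2 = (5*lam)^2 by ring, Real.sqrt_sq (by linarith)]
    · -- 25 lam < ℓ : Chebyshev-style
      have pb : ∀ z : Fin n → Bool, ((ℓ:ℝ) - lam) * ((count z : ℝ) - min ((count z : ℝ)) (ℓ:ℝ))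
          ≤ ((count z : ℝ) - lam)^2 := by
        intro z
        rcases le_total ((count z : ℝ)) (ℓ:ℝ) with h | h
        · rw [min_eq_left h]; simp [sq_nonneg]
        · rw [min_eq_right h]; nlinarith [hc0 z]
      have hDl : ((ℓ:ℝ) - lam) * (min lam (ℓ:ℝ) - Hber q ℓ) ≤ lam := by
        rw [hD, Finset.mul_sum]
        refine le_trans (Finset.sum_le_sum fun z _ => ?_) hvar
        calc ((ℓ:ℝ) - lam) * (berWeight q z * ((count z : ℝ) - min ((count z : ℝ)) (ℓ:ℝ)))
            = berWeight q z * (((ℓ:ℝ) - lam) * ((count z : ℝ) - min ((count z : ℝ)) (ℓ:ℝ))) := by ring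
          _ ≤ berWeight q z * ((count z : ℝ) - lam)^2 := mul_le_mul_of_nonneg_left (pb z) (hW z)
      rw [hmin] at hD0 hDl ⊢
      rw [div_mul_eq_mul_div, le_div_iff₀ hs0]
      nlinarith [mul_nonneg (mul_nonneg hD0 hs0.le) (sub_nonneg.2 hs1),
        mul_le_mul_of_nonneg_left h25.le hD0]
  · -- ℓ < lam : min = ℓ
    have hmin : min lam (ℓ:ℝ) = (ℓ:ℝ) := min_eq_right hcase.le
    have hone : (ℓ:ℝ) = ∑ z : Fin n → Bool, berWeight q z * (ℓ:ℝ) := by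
      rw [← Finset.sum_mul, sum_w, one_mul]
    have hD : min lam (ℓ:ℝ) - Hber q ℓ
        = ∑ z : Fin n → Bool, berWeight q z * ((ℓ:ℝ) - min ((count z : ℝ)) (ℓ:ℝ)) := by
      rw [hmin]
      conv_lhs => rw [hone]
      unfold Hber
      rw [← Finset.sum_sub_distrib]
      exact Finset.sum_congr rfl fun z _ => (mul_sub _ _ _).symm
    have hg0 : ∀ z : Fin n → Bool, 0 ≤ (ℓ:ℝ) - min ((count z : ℝ)) (ℓ:ℝ) :=
      fun z => sub_nonneg.2 (min_le_right _ _)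
    have hD0 : 0 ≤ min lam (ℓ:ℝ) - Hber q ℓ := by
      rw [hD]; exact Finset.sum_nonneg fun z _ => mul_nonneg (hW z) (hg0 z)
    rcases le_or_gt lam (25*(ℓ:ℝ)) with h25 | h25
    · -- lam ≤ 25 ℓ
      have pb : ∀ z : Fin n → Bool, (ℓ:ℝ) - min ((count z : ℝ)) (ℓ:ℝ) ≤ |(count z : ℝ) - lam| := by
        intro z
        rcases le_total ((count z : ℝ)) (ℓ:ℝ) with h | h
        · rw [min_eq_left h]
          calc (ℓ:ℝ) - (count z : ℝ) ≤ lam - (count z : ℝ) := by linarith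
            _ ≤ |(count z : ℝ) - lam| := by rw [abs_sub_comm]; exact le_abs_self _
        · rw [min_eq_right h]; simp [abs_nonneg]
      have hDle : min lam (ℓ:ℝ) - Hber q ℓ ≤ Real.sqrt lam := by
        rw [hD]
        refine le_trans (Finset.sum_le_sum fun z _ => mul_le_mul_of_nonneg_left (pb z) (hW z)) habs
      have h5s : 5 / s * min lam (ℓ:ℝ) = 5*s := by
        rw [hmin, ← hs2]; field_simp
      rw [h5s]
      refine le_trans hDle ?_
      calc Real.sqrt lam ≤ Real.sqrt (25*(ℓ:ℝ)) := Real.sqrt_le_sqrt h25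
        _ = 5*s := by
            rw [show (25:ℝ)*(ℓ:ℝ) = (5)^2*(ℓ:ℝ) by norm_num, Real.sqrt_mul (by positivity),
              Real.sqrt_sq (by norm_num)]
    · -- 25 ℓ < lam
      have pb : ∀ z : Fin n → Bool, (lam - (ℓ:ℝ))^2 * ((ℓ:ℝ) - min ((count z : ℝ)) (ℓ:ℝ))
          ≤ (ℓ:ℝ) * ((count z : ℝ) - lam)^2 := by
        intro z
        rcases le_total ((count z : ℝ)) (ℓ:ℝ) with h | h
        · rw [min_eq_left h]
          have h1 : (lam - (ℓ:ℝ))^2 ≤ (lam - (count z : ℝ))^2 := by nlinarith [hc0 z]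
          have h2 : (ℓ:ℝ) - (count z : ℝ) ≤ (ℓ:ℝ) := by linarith [hc0 z]
          calc (lam - (ℓ:ℝ))^2 * ((ℓ:ℝ) - (count z : ℝ))
              ≤ (lam - (count z : ℝ))^2 * (ℓ:ℝ) :=
                mul_le_mul h1 h2 (by linarith) (sq_nonneg _)
            _ = (ℓ:ℝ) * ((count z : ℝ) - lam)^2 := by ring
        · rw [min_eq_right h]
          simp only [sub_self, mul_zero]
          positivity
      have hDl : (lam - (ℓ:ℝ))^2 * (min lam (ℓ:ℝ) - Hber q ℓ) ≤ (ℓ:ℝ) * lam := by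
        rw [hD, Finset.mul_sum]
        have step : ∑ z : Fin n → Bool, (lam - (ℓ:ℝ))^2 * (berWeight q z * ((ℓ:ℝ) - min ((count z : ℝ)) (ℓ:ℝ)))
            ≤ ∑ z : Fin n → Bool, (ℓ:ℝ) * (berWeight q z * ((count z : ℝ) - lam)^2) := by
          refine Finset.sum_le_sum fun z _ => ?_
          calc (lam - (ℓ:ℝ))^2 * (berWeight q z * ((ℓ:ℝ) - min ((count z : ℝ)) (ℓ:ℝ)))
              = berWeight q z * ((lam - (ℓ:ℝ))^2 * ((ℓ:ℝ) - min ((count z : ℝ)) (ℓ:ℝ))) := by ring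
            _ ≤ berWeight q z * ((ℓ:ℝ) * ((count z : ℝ) - lam)^2) :=
                mul_le_mul_of_nonneg_left (pb z) (hW z)
            _ = (ℓ:ℝ) * (berWeight q z * ((count z : ℝ) - lam)^2) := by ring
        refine le_trans step ?_
        rw [← Finset.mul_sum]
        exact mul_le_mul_of_nonneg_left hvar hl0.le
      have hlamp : 0 < lam := by linarith
      have hll : 24*(ℓ:ℝ) ≤ lam - (ℓ:ℝ) := by linarith
      have hll2 : (24:ℝ)/25 * lam ≤ lam - (ℓ:ℝ) := by linarith
      have hsq : (576:ℝ)/25 * ((ℓ:ℝ)*lam) ≤ (lam - (ℓ:ℝ))^2 := by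
        nlinarith [mul_le_mul hll hll2 (by linarith : (0:ℝ) ≤ 24/25*lam) (by linarith : (0:ℝ) ≤ lam - (ℓ:ℝ))]
      rw [hmin] at hD0 hDl ⊢
      obtain ⟨D, hDdef⟩ : ∃ D, (ℓ:ℝ) - Hber q ℓ = D := ⟨_, rfl⟩
      rw [hDdef] at hD0 hDl ⊢
      rw [div_mul_eq_mul_div, le_div_iff₀ hs0]
      have hX : 0 < (ℓ:ℝ)*lam := mul_pos hl0 hlamp
      have h1 : D * ((576:ℝ)/25*((ℓ:ℝ)*lam)) ≤ (ℓ:ℝ)*lam :=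
        le_trans (mul_le_mul_of_nonneg_left hsq hD0) (by linarith [hDl])
      have hD25 : D ≤ 25/576 := by
        by_contra hcon
        push_neg at hcon
        have h2 : (576:ℝ)/25*((ℓ:ℝ)*lam) * (25/576) < (576:ℝ)/25*((ℓ:ℝ)*lam) * D :=
          mul_lt_mul_of_pos_left hcon (by positivity)
        linarith
      have h3 : D * s ≤ 25/576 * s := mul_le_mul_of_nonneg_right hD25 hs0.le
      linarith [h3, hsl, hl0]
end
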